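/- Let Q be a finite nonempty type and r a binary relation on Q. Then the disjoint union of countably many copies of (Q, r), namely the structure (Q × ℕ, r'), where r' relates (q, i) to (q', j) if and only if i = j and r q q', is unary FA-presentable. -/

import Mathlib

/-- The convolution word of the pair `(m, n)`, over the three-letter alphabet `Fin 3`
(`0` plays the role of `s`, `1` of `l`, `2` of `r`). -/
def convWord (m n : ℕ) : List (Fin 3) :=
  List.replicate (min m n) 0 ++ List.replicate (m - min m n) 1 ++
    List.replicate (n - min m n) 2

/-- The convolution language of a binary relation on `ℕ`. -/
def convLang (R : ℕ → ℕ → Prop) : Language (Fin 3) :=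
  {w | ∃ m n, R m n ∧ w = convWord m n}

/-- A binary relation on `ℕ` is regular if its convolution language is regular. -/
def RegularRel (R : ℕ → ℕ → Prop) : Prop :=
  (convLang R).IsRegular
inductive St (k : ℕ) where
  | z (a : Fin k)
  | o (a c : Fin k)
  | t (a c : Fin k)
  | dead
  deriving DecidableEq, Fintype

def M (k : ℕ) [NeZero k] (P : ℕ → ℕ → Prop) : DFA (Fin 3) (St k) where
  step st x :=
    match st with
    | .dead => .dead
    | .z a =>
      match x with
      | 0 => .z (a + 1)
      | 1 => if (a : ℕ) + 1 < k then .o a (a + 1) else .dead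
      | 2 => if (a : ℕ) + 1 < k then .t a (a + 1) else .dead
    | .o a c =>
      match x with
      | 1 => if (c : ℕ) + 1 < k then .o a (c + 1) else .dead
      | _ => .dead
    | .t a c =>
      match x with
      | 2 => if (c : ℕ) + 1 < k then .t a (c + 1) else .dead
      | _ => .dead
  start := .z 0
  accept := {st | match st with
    | .z a => P (a : ℕ) (a : ℕ)
    | .o a c => P (c : ℕ) (a : ℕ)
    | .t a c => P (a : ℕ) (c : ℕ)
    | .dead => False}

variable {k : ℕ} [NeZero k] {P : ℕ → ℕ → Prop}
open Fin.NatCast Fin.CommRing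

lemma natCast_mod_self (s : ℕ) : ((s % k : ℕ) : Fin k) = (s : Fin k) := by
  apply Fin.ext
  simp only [Fin.val_natCast]
  exact Nat.mod_mod_of_dvd s dvd_rfl

lemma evalFrom_dead (w : List (Fin 3)) : (M k P).evalFrom .dead w = .dead := by
  induction w with
  | nil => rfl
  | cons x w ih => exact ih

lemma eval_zeros_from (s : ℕ) (a : Fin k) :
    (M k P).evalFrom (.z a) (List.replicate s 0) = .z (a + (s : Fin k)) := by
  induction s generalizing a with
  | zero => simp
  | succ s ih =>
    rw [List.replicate_succ]
    have : (M k P).evalFrom (.z a) (0 :: List.replicate s 0)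
        = (M k P).evalFrom (.z (a + 1)) (List.replicate s 0) := rfl
    rw [this, ih]
    congr 1
    push_cast
    ring

lemma eval_ones_from (l : ℕ) (a c : Fin k) :
    (M k P).evalFrom (.o a c) (List.replicate l 1)
      = if (c : ℕ) + l < k then .o a (c + (l : Fin k)) else .dead := by
  induction l generalizing c with
  | zero => simp [c.isLt]
  | succ l ih =>
    rw [List.replicate_succ]
    have hstep : (M k P).evalFrom (.o a c) (1 :: List.replicate l 1)
        = (M k P).evalFrom (if (c : ℕ) + 1 < k then .o a (c + 1) else .dead)
            (List.replicate l 1) := rfl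
    rw [hstep]
    by_cases h : (c : ℕ) + 1 < k
    · rw [if_pos h, ih]
      have hv : ((c + 1 : Fin k) : ℕ) = (c : ℕ) + 1 := by
        have h2 : (1 : ℕ) % k = 1 := Nat.mod_eq_of_lt (by omega)
        rw [Fin.val_add, Fin.val_one', h2]
        exact Nat.mod_eq_of_lt h
      rw [hv]
      have : (c : ℕ) + 1 + l < k ↔ (c : ℕ) + (l + 1) < k := by omega
      simp only [this]
      split
      · congr 1
        push_cast
        ring
      · rfl
    · rw [if_neg h, evalFrom_dead, if_neg (by omega)]

lemma eval_twos_from (l : ℕ) (a c : Fin k) :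
    (M k P).evalFrom (.t a c) (List.replicate l 2)
      = if (c : ℕ) + l < k then .t a (c + (l : Fin k)) else .dead := by
  induction l generalizing c with
  | zero => simp [c.isLt]
  | succ l ih =>
    rw [List.replicate_succ]
    have hstep : (M k P).evalFrom (.t a c) (2 :: List.replicate l 2)
        = (M k P).evalFrom (if (c : ℕ) + 1 < k then .t a (c + 1) else .dead)
            (List.replicate l 2) := rfl
    rw [hstep]
    by_cases h : (c : ℕ) + 1 < k
    · rw [if_pos h, ih]
      have hv : ((c + 1 : Fin k) : ℕ) = (c : ℕ) + 1 := by
        have h2 : (1 : ℕ) % k = 1 := Nat.mod_eq_of_lt (by omega)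
        rw [Fin.val_add, Fin.val_one', h2]
        exact Nat.mod_eq_of_lt h
      rw [hv]
      have : (c : ℕ) + 1 + l < k ↔ (c : ℕ) + (l + 1) < k := by omega
      simp only [this]
      split
      · congr 1
        push_cast
        ring
      · rfl
    · rw [if_neg h, evalFrom_dead, if_neg (by omega)]

lemma eval_zeros (s : ℕ) :
    (M k P).eval (List.replicate s 0) = .z (s : Fin k) := by
  have : (M k P).eval (List.replicate s 0) = (M k P).evalFrom (.z 0) (List.replicate s 0) := rfl
  rw [this, eval_zeros_from]
  congr 1
  simp

def acc (P : ℕ → ℕ → Prop) : St k → Prop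
  | .z a => P (a : ℕ) (a : ℕ)
  | .o a c => P (c : ℕ) (a : ℕ)
  | .t a c => P (a : ℕ) (c : ℕ)
  | .dead => False

lemma mem_accept_iff (st : St k) : st ∈ (M k P).accept ↔ acc P st := by
  cases st <;> rfl

lemma val_natCast_add_one (s : ℕ) (h : s % k + 1 < k) :
    (((s : Fin k) + 1 : Fin k) : ℕ) = s % k + 1 := by
  have h2 : (1 : ℕ) % k = 1 := Nat.mod_eq_of_lt (by omega)
  rw [Fin.val_add, Fin.val_one', Fin.val_natCast, h2]
  exact Nat.mod_eq_of_lt h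

lemma eval_os (s l : ℕ) (hl : 1 ≤ l) :
    (M k P).eval (List.replicate s 0 ++ List.replicate l 1)
      = if s % k + l < k then .o (s : Fin k) ((s % k + l : ℕ) : Fin k) else .dead := by
  obtain ⟨l', rfl⟩ : ∃ l', l = l' + 1 := ⟨l - 1, by omega⟩
  rw [DFA.eval, DFA.evalFrom_of_append]
  have h0 : (M k P).evalFrom (M k P).start (List.replicate s 0) = .z (s : Fin k) :=
    eval_zeros s
  rw [h0, List.replicate_succ]
  have hstep : (M k P).evalFrom (.z (s : Fin k)) (1 :: List.replicate l' 1)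
      = (M k P).evalFrom
          (if ((s : Fin k) : ℕ) + 1 < k then .o (s : Fin k) ((s : Fin k) + 1) else .dead)
          (List.replicate l' 1) := rfl
  rw [hstep, Fin.val_natCast]
  by_cases h : s % k + 1 < k
  · rw [if_pos h, eval_ones_from, val_natCast_add_one s h]
    have hiff : s % k + 1 + l' < k ↔ s % k + (l' + 1) < k := by omega
    simp only [hiff]
    split
    · congr 1
      rw [← natCast_mod_self (k := k) s]
      push_cast
      ring
    · rfl
  · rw [if_neg h, evalFrom_dead, if_neg (by omega)]

lemma eval_ts (s l : ℕ) (hl : 1 ≤ l) :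
    (M k P).eval (List.replicate s 0 ++ List.replicate l 2)
      = if s % k + l < k then .t (s : Fin k) ((s % k + l : ℕ) : Fin k) else .dead := by
  obtain ⟨l', rfl⟩ : ∃ l', l = l' + 1 := ⟨l - 1, by omega⟩
  rw [DFA.eval, DFA.evalFrom_of_append]
  have h0 : (M k P).evalFrom (M k P).start (List.replicate s 0) = .z (s : Fin k) :=
    eval_zeros s
  rw [h0, List.replicate_succ]
  have hstep : (M k P).evalFrom (.z (s : Fin k)) (2 :: List.replicate l' 2)
      = (M k P).evalFrom
          (if ((s : Fin k) : ℕ) + 1 < k then .t (s : Fin k) ((s : Fin k) + 1) else .dead)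
          (List.replicate l' 2) := rfl
  rw [hstep, Fin.val_natCast]
  by_cases h : s % k + 1 < k
  · rw [if_pos h, eval_twos_from, val_natCast_add_one s h]
    have hiff : s % k + 1 + l' < k ↔ s % k + (l' + 1) < k := by omega
    simp only [hiff]
    split
    · congr 1
      rw [← natCast_mod_self (k := k) s]
      push_cast
      ring
    · rfl
  · rw [if_neg h, evalFrom_dead, if_neg (by omega)]

lemma shape (Pa : ℕ → ℕ → Prop) (w : List (Fin 3)) :
    (∃ s, w = List.replicate s 0) ∨
    (∃ s l, 1 ≤ l ∧ w = List.replicate s 0 ++ List.replicate l 1) ∨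
    (∃ s l, 1 ≤ l ∧ w = List.replicate s 0 ++ List.replicate l 2) ∨
    (M k Pa).eval w = .dead := by
  induction w using List.reverseRecOn with
  | nil => exact Or.inl ⟨0, rfl⟩
  | append_singleton w x ih =>
    have hx : x = 0 ∨ x = 1 ∨ x = 2 := by
      rcases x with ⟨xv, hxv⟩
      interval_cases xv
      · exact Or.inl rfl
      · exact Or.inr (Or.inl rfl)
      · exact Or.inr (Or.inr rfl)
    rcases ih with ⟨s, rfl⟩ | ⟨s, l, hl, rfl⟩ | ⟨s, l, hl, rfl⟩ | hdead
    · rcases hx with rfl | rfl | rfl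
      · exact Or.inl ⟨s + 1, by rw [List.replicate_succ']⟩
      · exact Or.inr (Or.inl ⟨s, 1, le_refl 1, by simp⟩)
      · exact Or.inr (Or.inr (Or.inl ⟨s, 1, le_refl 1, by simp⟩))
    · rcases hx with rfl | rfl | rfl
      · refine Or.inr (Or.inr (Or.inr ?_))
        rw [DFA.eval_append_singleton, eval_os s l hl]
        split <;> rfl
      · exact Or.inr (Or.inl ⟨s, l + 1, by omega,
          by rw [List.append_assoc, ← List.replicate_succ']⟩)
      · refine Or.inr (Or.inr (Or.inr ?_))
        rw [DFA.eval_append_singleton, eval_os s l hl]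
        split <;> rfl
    · rcases hx with rfl | rfl | rfl
      · refine Or.inr (Or.inr (Or.inr ?_))
        rw [DFA.eval_append_singleton, eval_ts s l hl]
        split <;> rfl
      · refine Or.inr (Or.inr (Or.inr ?_))
        rw [DFA.eval_append_singleton, eval_ts s l hl]
        split <;> rfl
      · exact Or.inr (Or.inr (Or.inl ⟨s, l + 1, by omega,
          by rw [List.append_assoc, ← List.replicate_succ']⟩))
    · refine Or.inr (Or.inr (Or.inr ?_))
      rw [DFA.eval_append_singleton, hdead]
      rfl

lemma mod_div_add (n l : ℕ) (h : n % k + l < k) :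
    (n + l) % k = n % k + l ∧ (n + l) / k = n / k := by
  have hk : 0 < k := Nat.pos_of_ne_zero (NeZero.ne k)
  have h1 := Nat.div_add_mod n k
  have e : n + l = (n % k + l) + k * (n / k) := by omega
  constructor
  · rw [e, Nat.add_mul_mod_self_left, Nat.mod_eq_of_lt h]
  · rw [e, Nat.add_mul_div_left _ _ hk, Nat.div_eq_of_lt h, zero_add]

lemma mod_of_div_eq {m n : ℕ} (hle : n ≤ m) (hdiv : m / k = n / k) :
    m % k = n % k + (m - n) ∧ n % k + (m - n) < k := by
  have hk : 0 < k := Nat.pos_of_ne_zero (NeZero.ne k)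
  have h1 := Nat.div_add_mod m k
  have h2 := Nat.div_add_mod n k
  rw [hdiv] at h1
  have hm := Nat.mod_lt m hk
  set t := k * (n / k) with ht
  omega

theorem M_accepts_eq :
    (M k P).accepts = convLang (fun m n => P (m % k) (n % k) ∧ m / k = n / k) := by
  ext w
  rw [DFA.mem_accepts]
  constructor
  · intro hw
    rcases shape (k := k) P w with ⟨s, rfl⟩ | ⟨s, l, hl, rfl⟩ | ⟨s, l, hl, rfl⟩ | hdead
    · rw [eval_zeros, mem_accept_iff] at hw
      have hP : P (s % k) (s % k) := by simpa [acc, Fin.val_natCast] using hw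
      exact ⟨s, s, ⟨hP, rfl⟩, by simp [convWord]⟩
    · rw [eval_os s l hl] at hw
      by_cases h : s % k + l < k
      · rw [if_pos h, mem_accept_iff] at hw
        have hP : P (s % k + l) (s % k) := by
          simp only [mem_accept_iff, acc, Fin.val_natCast] at hw
          rwa [Nat.mod_eq_of_lt h] at hw
        obtain ⟨hm, hdiv⟩ := mod_div_add s l h
        refine ⟨s + l, s, ⟨by rwa [hm], hdiv⟩, ?_⟩
        have hmin : min (s + l) s = s := min_eq_right (Nat.le_add_right s l)
        simp [convWord, hmin]
      · rw [if_neg h, mem_accept_iff] at hw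
        exact absurd hw (by simp [acc])
    · rw [eval_ts s l hl] at hw
      by_cases h : s % k + l < k
      · rw [if_pos h, mem_accept_iff] at hw
        have hP : P (s % k) (s % k + l) := by
          simp only [mem_accept_iff, acc, Fin.val_natCast] at hw
          rwa [Nat.mod_eq_of_lt h] at hw
        obtain ⟨hm, hdiv⟩ := mod_div_add s l h
        refine ⟨s, s + l, ⟨by rwa [hm], hdiv.symm⟩, ?_⟩
        have hmin : min s (s + l) = s := min_eq_left (Nat.le_add_right s l)
        simp [convWord, hmin]
      · rw [if_neg h, mem_accept_iff] at hw
        exact absurd hw (by simp [acc])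
    · rw [hdead, mem_accept_iff] at hw
      exact absurd hw (by simp [acc])
  · rintro ⟨m, n, ⟨hP, hdiv⟩, rfl⟩
    rcases le_total n m with h | h
    · have hmin : min m n = n := min_eq_right h
      have hw : convWord m n = List.replicate n 0 ++ List.replicate (m - n) 1 := by
        simp [convWord, hmin]
      rw [hw]
      rcases Nat.eq_zero_or_pos (m - n) with h0 | h0
      · have hmn : m = n := by omega
        rw [h0]
        simp only [List.replicate_zero, List.append_nil]
        rw [eval_zeros, mem_accept_iff]
        subst hmn
        simpa [acc, Fin.val_natCast] using hP
      · obtain ⟨hm, hlt⟩ := mod_of_div_eq h hdiv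
        rw [eval_os n (m - n) h0, if_pos hlt, mem_accept_iff]
        simpa [acc, Fin.val_natCast, Nat.mod_eq_of_lt hlt, ← hm] using hP
    · have hmin : min m n = m := min_eq_left h
      have hw : convWord m n = List.replicate m 0 ++ List.replicate (n - m) 2 := by
        simp [convWord, hmin]
      rw [hw]
      rcases Nat.eq_zero_or_pos (n - m) with h0 | h0
      · have hmn : n = m := by omega
        rw [h0]
        simp only [List.replicate_zero, List.append_nil]
        rw [eval_zeros, mem_accept_iff]
        subst hmn
        simpa [acc, Fin.val_natCast] using hP
      · obtain ⟨hm, hlt⟩ := mod_of_div_eq h hdiv.symm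
        rw [eval_ts m (n - m) h0, if_pos hlt, mem_accept_iff]
        simpa [acc, Fin.val_natCast, Nat.mod_eq_of_lt hlt, ← hm] using hP

theorem regularRel_mod (P : ℕ → ℕ → Prop) :
    RegularRel (fun m n => P (m % k) (n % k) ∧ m / k = n / k) :=
  ⟨St k, inferInstance, M k P, M_accepts_eq (k := k) (P := P)⟩

/-- The unary language over a one-letter alphabet associated to a set `L ⊆ ℕ`,
identifying `a^n` with `n`. -/
def unaryLang (L : Set ℕ) : Language Unit :=
  {w | w.length ∈ L}

/-- A (countable) structure `(X, ρ)` with one binary relation is unary FA-presentable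
if there are a set `L ⊆ ℕ` whose unary language is regular and a surjection
`φ : L → X` such that equality and the relation, pulled back along `φ`, are
regular relations. -/
def UnaryFAPresentable {X : Type*} (ρ : X → X → Prop) : Prop :=
  ∃ L : Set ℕ, (unaryLang L).IsRegular ∧
    ∃ φ : ℕ → X, (∀ x, ∃ n ∈ L, φ n = x) ∧
      RegularRel (fun m n => m ∈ L ∧ n ∈ L ∧ φ m = φ n) ∧
      RegularRel (fun m n => m ∈ L ∧ n ∈ L ∧ ρ (φ m) (φ n))

lemma convLang_congr {R R' : ℕ → ℕ → Prop} (h : ∀ m n, R m n ↔ R' m n) :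
    convLang R = convLang R' := by
  ext w
  simp only [convLang, Set.mem_setOf_eq, h]

lemma regularRel_congr {R R' : ℕ → ℕ → Prop} (h : ∀ m n, R m n ↔ R' m n)
    (hR' : RegularRel R') : RegularRel R := by
  unfold RegularRel
  rw [convLang_congr h]
  exact hR'

lemma unaryLang_univ_regular : (unaryLang Set.univ).IsRegular :=
  ⟨Unit, inferInstance, ⟨fun _ _ => (), (), Set.univ⟩, by
    ext w
    constructor <;> intro <;> trivial⟩

theorem stmt5 (Q : Type) [Fintype Q] [Nonempty Q] (r : Q → Q → Prop) :
    UnaryFAPresentable (fun p q : Q × ℕ => p.2 = q.2 ∧ r p.1 q.1) := by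
  classical
  set k := Fintype.card Q with hkdef
  have hk : 0 < k := Fintype.card_pos
  haveI : NeZero k := ⟨hk.ne'⟩
  let e : Fin k ≃ Q := (Fintype.equivFin Q).symm
  refine ⟨Set.univ, unaryLang_univ_regular, fun n => (e (n : Fin k), n / k), ?_, ?_, ?_⟩
  · rintro ⟨q, i⟩
    refine ⟨k * i + (e.symm q : ℕ), Set.mem_univ _, ?_⟩
    have hv : (e.symm q : ℕ) < k := (e.symm q).isLt
    have hmod : (k * i + (e.symm q : ℕ)) % k = (e.symm q : ℕ) := by
      rw [Nat.mul_add_mod, Nat.mod_eq_of_lt hv]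
    have hdiv : (k * i + (e.symm q : ℕ)) / k = i := by
      rw [Nat.mul_add_div hk, Nat.div_eq_of_lt hv, add_zero]
    have hcast : ((k * i + (e.symm q : ℕ) : ℕ) : Fin k) = e.symm q := by
      apply Fin.ext
      rw [Fin.val_natCast, hmod]
    show (e ((k * i + (e.symm q : ℕ) : ℕ) : Fin k), (k * i + (e.symm q : ℕ)) / k) = (q, i)
    rw [hcast, hdiv, Equiv.apply_symm_apply]
  · refine regularRel_congr (R' := fun m n => (fun a b => a = b) (m % k) (n % k)
      ∧ m / k = n / k) ?_ (regularRel_mod (k := k) _)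
    intro m n
    simp only [Set.mem_univ, true_and]
    constructor
    · rintro h
      have h1 : e ((m : Fin k)) = e ((n : Fin k)) := congrArg Prod.fst h
      have h2 : m / k = n / k := congrArg Prod.snd h
      refine ⟨?_, h2⟩
      have := e.injective h1
      have := congrArg Fin.val this
      rwa [Fin.val_natCast, Fin.val_natCast] at this
    · rintro ⟨h1, h2⟩
      have : ((m : ℕ) : Fin k) = ((n : ℕ) : Fin k) := by
        apply Fin.ext
        rw [Fin.val_natCast, Fin.val_natCast, h1]
      rw [Prod.ext_iff]
      exact ⟨congrArg e this, h2⟩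
  · refine regularRel_congr (R' := fun m n =>
      (fun a b => r (e ((a : ℕ) : Fin k)) (e ((b : ℕ) : Fin k))) (m % k) (n % k)
      ∧ m / k = n / k) ?_
      (regularRel_mod (k := k) (fun a b => r (e ((a : ℕ) : Fin k)) (e ((b : ℕ) : Fin k))))
    intro m n
    simp only [Set.mem_univ, true_and]
    have hm : ((m % k : ℕ) : Fin k) = (m : Fin k) := natCast_mod_self m
    have hn : ((n % k : ℕ) : Fin k) = (n : Fin k) := natCast_mod_self n
    rw [hm, hn]
    tauto
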